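/- Let γ be an infinite cardinal and suppose there exists a cardinal κ such that the (ω,κ,γ)-hat game is losing; let κ₀ be the least such cardinal. Then κ₀ > γ, κ₀ is strongly losing (i.e., the (ω,κ₀,δ)-hat game is losing for every infinite cardinal δ < κ₀), and κ₀ is the least strongly losing cardinal greater than γ. -/

import Mathlib

open Cardinal Set

universe u v

/-- `f` depends on only finitely many coordinates of its argument; this is exactly continuity
with respect to the product topology on `ι → C`, where `C` and `X` carry the discrete topology. -/
def FinDep {ι : Type v} {C : Type u} {X : Type*} (f : (ι → C) → X) : Prop :=
  ∀ h : ι → C, ∃ F : Finset ι, ∀ h' : ι → C, (∀ i ∈ F, h' i = h i) → f h' = f h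

/-- A strategy in the hat game with logicians `L`, colours `C` and `< γ` many guesses:
each logician `a : L` produces a set of fewer than `γ` colours as guesses, where the guess is a
continuous function of the hats of the other logicians (in particular it depends on only finitely
many of the other hats, and never on the logician's own hat). -/
structure HatStrategy (L : Type v) (C : Type u) (γ : Cardinal.{u}) where
  guess : L → (L → C) → Set C
  small : ∀ a h, #(guess a h) < γ
  continuous : ∀ a, FinDep (guess a)
  blind : ∀ a : L, ∀ h h' : L → C, (∀ b, b ≠ a → h b = h' b) → guess a h = guess a h'

/-- A strategy is winning if against every colouring some logician guesses their own colour. -/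
def HatStrategy.IsWinning {L : Type v} {C : Type u} {γ : Cardinal.{u}}
    (S : HatStrategy L C γ) : Prop :=
  ∀ h : L → C, ∃ a, h a ∈ S.guess a h

/-- The hat game with logicians `L`, colours `C` and `< γ` many guesses is winning for the
logicians. -/
def HatWinning (L : Type v) (C : Type u) (γ : Cardinal.{u}) : Prop :=
  ∃ S : HatStrategy L C γ, S.IsWinning

/-- The `(λ, κ, γ)`-hat game is winning: `λ`-many logicians, `κ`-many colours,
`< γ` many guesses. -/
def HatGameWinning (lam κ γ : Cardinal.{u}) : Prop :=
  HatWinning lam.out κ.out γ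

/-- `κ` is strongly losing: the `(ω,κ,δ)`-hat game is losing for every infinite `δ < κ`. -/
def StronglyLosing (κ : Cardinal.{u}) : Prop :=
  ∀ δ : Cardinal.{u}, ℵ₀ ≤ δ → δ < κ → ¬ HatWinning ℕ κ.out δ

section Aux

/-- Transport a winning strategy along an equivalence of colour sets. -/
theorem hatWinning_congr_colour {L : Type v} {C C' : Type u} {γ : Cardinal.{u}}
    (e : C ≃ C') (h : HatWinning L C γ) : HatWinning L C' γ := by
  obtain ⟨S, hS⟩ := h
  refine ⟨⟨fun a h => e '' S.guess a (fun b => e.symm (h b)), ?_, ?_, ?_⟩, ?_⟩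
  · intro a h
    rw [Cardinal.mk_image_eq e.injective]
    exact S.small _ _
  · intro a h
    obtain ⟨F, hF⟩ := S.continuous a (fun b => e.symm (h b))
    refine ⟨F, fun h' hh' => ?_⟩
    show e '' S.guess a (fun b => e.symm (h' b)) = e '' S.guess a (fun b => e.symm (h b))
    rw [hF (fun b => e.symm (h' b)) (fun i hi => congrArg e.symm (hh' i hi))]
  · intro a h h' hb
    show e '' S.guess a (fun b => e.symm (h b)) = e '' S.guess a (fun b => e.symm (h' b))
    rw [S.blind a (fun b => e.symm (h b)) (fun b => e.symm (h' b)) (fun b hba => congrArg e.symm (hb b hba))]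
  · intro h
    obtain ⟨a, ha⟩ := hS (fun b => e.symm (h b))
    exact ⟨a, ⟨_, ha, e.apply_symm_apply _⟩⟩

/-- Transport a winning strategy along an equivalence of player sets. -/
theorem hatWinning_congr_player {L L' : Type v} {C : Type u} {γ : Cardinal.{u}}
    (e : L ≃ L') (h : HatWinning L C γ) : HatWinning L' C γ := by
  obtain ⟨S, hS⟩ := h
  classical
  refine ⟨⟨fun a h => S.guess (e.symm a) (fun b => h (e b)), ?_, ?_, ?_⟩, ?_⟩
  · intro a h; exact S.small _ _
  · intro a h
    obtain ⟨F, hF⟩ := S.continuous (e.symm a) (fun b => h (e b))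
    refine ⟨F.image e, fun h' hh' => ?_⟩
    exact hF _ (fun i hi => hh' (e i) (Finset.mem_image_of_mem e hi))
  · intro a h h' hb
    exact S.blind (e.symm a) _ _
      (fun b hba => hb (e b) (fun hc => hba (by rw [← hc, e.symm_apply_apply])))
  · intro h
    obtain ⟨a, ha⟩ := hS (fun b => h (e b))
    exact ⟨e a, by simpa using ha⟩

/-- The descending strategy wins the game with colour set `γ.ord.toType`. -/
theorem hatWinning_toType {γ : Cardinal.{u}} (hγ : ℵ₀ ≤ γ) :
    HatWinning ℕ (γ.ord.ToType) γ := by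
  refine ⟨⟨fun n h => Set.Iic (h (n+1)), ?_, ?_, ?_⟩, ?_⟩
  · intro n h
    have h1 : #(Set.Iio (h (n+1))) < γ := Cardinal.mk_Iio_ord_toType _
    have h2 : #(Set.Iic (h (n+1))) ≤ #(Set.Iio (h (n+1))) + 1 := by
      rw [← Set.Iio_insert]
      exact Cardinal.mk_insert_le
    exact lt_of_le_of_lt h2 (Cardinal.add_lt_of_lt hγ h1 (lt_of_lt_of_le one_lt_aleph0 hγ))
  · intro n h
    refine ⟨{n+1}, fun h' hh' => ?_⟩
    show Set.Iic (h' (n+1)) = Set.Iic (h (n+1))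
    rw [hh' (n+1) (Finset.mem_singleton_self _)]
  · intro n h h' hb
    show Set.Iic (h (n+1)) = Set.Iic (h' (n+1))
    rw [hb (n+1) (by omega)]
  · intro h
    by_contra hc
    push_neg at hc
    obtain ⟨x, ⟨n, rfl⟩, hmin⟩ :=
      (wellFounded_lt (α := γ.ord.ToType)).has_min (Set.range h) ⟨h 0, 0, rfl⟩
    exact hmin (h (n+1)) ⟨n+1, rfl⟩ (lt_of_not_ge (hc n))

/-- If the number of colours is at most `γ` and `γ` is infinite, the game with `< γ`
guesses is winning. -/
theorem hatWinning_of_mk_le {C : Type u} {γ : Cardinal.{u}} (hγ : ℵ₀ ≤ γ) (hC : #C ≤ γ) :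
    HatWinning ℕ C γ := by
  rcases hC.lt_or_eq with h | h
  · refine ⟨⟨fun _ _ => Set.univ, fun _ _ => ?_, fun a h => ⟨∅, fun _ _ => rfl⟩,
      fun _ _ _ _ => rfl⟩, fun h => ⟨0, Set.mem_univ _⟩⟩
    simpa [Cardinal.mk_univ] using h
  · have h2 : #C = #(γ.ord.ToType) := by rw [h, Cardinal.mk_ord_toType]
    obtain ⟨e⟩ := Cardinal.eq.mp h2
    exact hatWinning_congr_colour e.symm (hatWinning_toType hγ)

end Aux

section Comp

open scoped Classical

variable {C D : Type u} {δ γ : Cardinal.{u}}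

/-- Code an element of a small set `G ⊆ C` by an element of `D`. -/
noncomputable def codeF (D : Type u) [Nonempty D] (G : Set C) (x : C) : D :=
  if h : Nonempty (↥G ↪ D) then
    (if hx : x ∈ G then h.some ⟨x, hx⟩ else Classical.arbitrary D)
  else Classical.arbitrary D

lemma codeF_injOn [Nonempty D] {G : Set C} (hG : #↥G ≤ #D) {x y : C}
    (hx : x ∈ G) (hy : y ∈ G) (hxy : codeF D G x = codeF D G y) : x = y := by
  have hne : Nonempty (↥G ↪ D) := (Cardinal.le_def _ _).mp hG
  rw [codeF, dif_pos hne, dif_pos hx, codeF, dif_pos hne, dif_pos hy] at hxy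
  have := hne.some.injective hxy
  exact congrArg Subtype.val this

/-- The decoded guesses: elements of `G` whose code lies in `A`. -/
def Uset (D : Type u) [Nonempty D] (G : Set C) (A : Set D) : Set C :=
  {x | x ∈ G ∧ codeF D G x ∈ A}

lemma mk_Uset_le [Nonempty D] {G : Set C} {A : Set D} (hG : #↥G ≤ #D) :
    #↥(Uset D G A) ≤ #↥A := by
  refine Cardinal.mk_le_of_injective
    (f := fun x : ↥(Uset D G A) => (⟨codeF D G x.1, x.2.2⟩ : ↥A)) ?_
  intro x y hxy
  exact Subtype.ext (codeF_injOn hG x.2.1 y.2.1 (congrArg Subtype.val hxy))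

/-- The `m`-th row of a colouring of the grid. -/
def rowc (h : ℕ × ℕ → C) (m : ℕ) : ℕ → C := fun j => h (j, m)

/-- The code (in `D`) of the colour at the first position of a row at which the
strategy `S` guesses correctly. -/
noncomputable def rowcode [Nonempty D] (S : HatStrategy ℕ C δ) (hS : S.IsWinning)
    (c : ℕ → C) : D :=
  codeF D (S.guess (Nat.find (hS c)) c) (c (Nat.find (hS c)))

lemma rowcode_exists [Nonempty D] (S : HatStrategy ℕ C δ) (hS : S.IsWinning) (c : ℕ → C) :
    ∃ a, ∃ _ : c a ∈ S.guess a c, rowcode (D := D) S hS c = codeF D (S.guess a c) (c a) :=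
  ⟨_, Nat.find_spec (hS c), rfl⟩

lemma rowcode_findep [Nonempty D] (S : HatStrategy ℕ C δ) (hS : S.IsWinning) (c : ℕ → C) :
    ∃ F : Finset ℕ, ∀ c' : ℕ → C, (∀ i ∈ F, c' i = c i) →
      rowcode (D := D) S hS c' = rowcode S hS c := by
  set N := Nat.find (hS c) with hN
  choose F hF using fun k => S.continuous k c
  refine ⟨(Finset.range (N+1)) ∪ (Finset.range (N+1)).biUnion F, fun c' hc' => ?_⟩
  have hval : ∀ k ≤ N, c' k = c k := fun k hk =>
    hc' k (Finset.mem_union_left _ (Finset.mem_range.mpr (by omega)))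
  have hg : ∀ k ≤ N, S.guess k c' = S.guess k c := fun k hk =>
    hF k c' (fun i hi => hc' i (Finset.mem_union_right _
      (Finset.mem_biUnion.mpr ⟨k, Finset.mem_range.mpr (by omega), hi⟩)))
  have hgen : ∀ k ≤ N, (c' k ∈ S.guess k c' ↔ c k ∈ S.guess k c) := fun k hk => by
    rw [hval k hk, hg k hk]
  have hfind : Nat.find (hS c') = N := by
    refine le_antisymm (Nat.find_le ((hgen N le_rfl).mpr (Nat.find_spec (hS c)))) ?_
    by_contra hlt
    push_neg at hlt
    exact Nat.find_min (hS c) hlt ((hgen _ hlt.le).mp (Nat.find_spec (hS c')))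
  show codeF D (S.guess (Nat.find (hS c')) c') (c' (Nat.find (hS c'))) =
    codeF D (S.guess N c) (c N)
  rw [hfind, hg N le_rfl, hval N le_rfl]

/-- Composition: a winning strategy with `< δ` guesses over colours `C` composed with a
winning strategy with `< γ` guesses over `δ`-many colours `D` yields a winning strategy with
`< γ` guesses over `C`, on the doubled player set. -/
theorem hatWinning_comp [Nonempty D] (hδD : δ ≤ #D)
    (S : HatStrategy ℕ C δ) (hS : S.IsWinning)
    (T : HatStrategy ℕ D γ) (hT : T.IsWinning) : HatWinning (ℕ × ℕ) C γ := by
  refine ⟨⟨fun p h => Uset D (S.guess p.1 (rowc h p.2))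
      (T.guess p.2 (fun j => rowcode S hS (rowc h j))), ?_, ?_, ?_⟩, ?_⟩
  · intro p h
    exact lt_of_le_of_lt (mk_Uset_le ((S.small _ _).le.trans hδD)) (T.small _ _)
  · intro p h
    obtain ⟨F₁, hF₁⟩ := S.continuous p.1 (rowc h p.2)
    obtain ⟨F₂, hF₂⟩ := T.continuous p.2 (fun j => rowcode (D := D) S hS (rowc h j))
    choose F₃ hF₃ using fun j => rowcode_findep (D := D) S hS (rowc h j)
    refine ⟨F₁.image (·, p.2) ∪ F₂.biUnion (fun j => (F₃ j).image (·, j)),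
      fun h' hh' => ?_⟩
    have hG : S.guess p.1 (rowc h' p.2) = S.guess p.1 (rowc h p.2) :=
      hF₁ (rowc h' p.2) (fun i hi => hh' (i, p.2)
        (Finset.mem_union_left _ (Finset.mem_image_of_mem _ hi)))
    have hd : ∀ j ∈ F₂, rowcode (D := D) S hS (rowc h' j) = rowcode S hS (rowc h j) :=
      fun j hj => hF₃ j (rowc h' j) (fun i hi => hh' (i, j)
        (Finset.mem_union_right _ (Finset.mem_biUnion.mpr
          ⟨j, hj, Finset.mem_image_of_mem _ hi⟩)))
    have hT' : T.guess p.2 (fun j => rowcode (D := D) S hS (rowc h' j)) =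
        T.guess p.2 (fun j => rowcode S hS (rowc h j)) := hF₂ _ hd
    show Uset D (S.guess p.1 (rowc h' p.2)) _ = Uset D (S.guess p.1 (rowc h p.2)) _
    rw [hG, hT']
  · intro p h h' hb
    have hG : S.guess p.1 (rowc h p.2) = S.guess p.1 (rowc h' p.2) :=
      S.blind p.1 _ _ (fun b hb' => hb (b, p.2) (fun hc => hb' (congrArg Prod.fst hc)))
    have hT' : T.guess p.2 (fun j => rowcode (D := D) S hS (rowc h j)) =
        T.guess p.2 (fun j => rowcode S hS (rowc h' j)) :=
      T.blind p.2 _ _ (fun j hj => congrArg (rowcode S hS)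
        (funext fun i => hb (i, j) (fun hc => hj (congrArg Prod.snd hc))))
    show Uset D (S.guess p.1 (rowc h p.2)) _ = Uset D (S.guess p.1 (rowc h' p.2)) _
    rw [hG, hT']
  · intro h
    obtain ⟨m, hm⟩ := hT (fun j => rowcode (D := D) S hS (rowc h j))
    obtain ⟨a, hx, hcode⟩ := rowcode_exists (D := D) S hS (rowc h m)
    refine ⟨(a, m), hx, ?_⟩
    show codeF D (S.guess a (rowc h m)) (h (a, m)) ∈ _
    rw [show codeF D (S.guess a (rowc h m)) (h (a, m)) =
      rowcode (D := D) S hS (rowc h m) from hcode.symm]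
    exact hm

end Comp


/-- If `γ` is infinite and `κ₀` is the least cardinal such that the `(ω,κ₀,γ)`-hat game is
losing, then `κ₀ > γ`, `κ₀` is strongly losing, and `κ₀` is the least strongly losing cardinal
above `γ`. -/
theorem stmt13 (γ κ₀ : Cardinal.{u}) (hγ : ℵ₀ ≤ γ)
    (h₀ : ¬ HatWinning ℕ κ₀.out γ)
    (hmin : ∀ κ' : Cardinal.{u}, κ' < κ₀ → HatWinning ℕ κ'.out γ) :
    γ < κ₀ ∧ StronglyLosing κ₀ ∧
      ∀ μ : Cardinal.{u}, γ < μ → StronglyLosing μ → κ₀ ≤ μ := by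
  have hκγ : γ < κ₀ := by
    by_contra hlt
    push_neg at hlt
    exact h₀ (hatWinning_of_mk_le hγ (by rw [Cardinal.mk_out]; exact hlt))
  refine ⟨hκγ, ?_, ?_⟩
  · intro δ hδ hδκ W
    obtain ⟨S, hS⟩ := W
    obtain ⟨T, hT⟩ := hmin δ hδκ
    haveI : Nonempty δ.out := by
      rw [← Cardinal.mk_ne_zero_iff, Cardinal.mk_out]
      exact fun h => Cardinal.aleph0_ne_zero (le_antisymm (h ▸ hδ) zero_le)
    have hW2 : HatWinning (ℕ × ℕ) κ₀.out γ :=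
      hatWinning_comp (D := δ.out) (Cardinal.mk_out δ).ge S hS T hT
    exact h₀ (hatWinning_congr_player (Denumerable.eqv (ℕ × ℕ)) hW2)
  · intro μ hγμ hSL
    by_contra hlt
    push_neg at hlt
    exact hSL γ hγ hγμ (hmin μ hlt)
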